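/- Let (Ω, 𝔉, P) be a probability space with a dynamical system (τ_x)_{x∈ℝ^d}, let 1 ≤ p < ∞, let f ∈ L^p(Ω;P), let i ∈ {1,…,d}, and suppose that g ∈ L^p(Ω;P) is the i-th stochastic derivative D_i f of f. Then for P-almost every ω ∈ Ω: for every continuously differentiable compactly supported ψ : ℝ^d → ℝ one has ∫_{ℝ^d} f(τ_x ω) ∂_i ψ(x) dx = − ∫_{ℝ^d} ψ(x) g(τ_x ω) dx; that is, the realization x ↦ f(τ_x ω) has the realization x ↦ g(τ_x ω) as its i-th weak partial derivative on ℝ^d. -/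

import Mathlib

open MeasureTheory Filter Metric

private abbrev ES (d : ℕ) := EuclideanSpace ℝ (Fin d)

section Aux

variable {d : ℕ} {Ω : Type*} [MeasurableSpace Ω] (P : Measure Ω) [IsProbabilityMeasure P]
  (τ : ES d → Ω → Ω)

/-- For fixed ω, `x ↦ τ x ω` is measurable. -/
lemma meas_slice (hmeas : Measurable fun q : ES d × Ω => τ q.1 q.2) (ω : Ω) :
    Measurable fun x : ES d => τ x ω :=
  hmeas.comp (measurable_id.prodMk measurable_const)

/-- Realizations of integrable functions are integrable on finite-measure sets, a.e. -/
lemma aux_int (hmp : ∀ x, MeasurePreserving (τ x) P P)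
    (hmeas : Measurable fun q : ES d × Ω => τ q.1 q.2)
    {F : Ω → ℝ} (hFm : StronglyMeasurable F) (hFi : Integrable F P)
    {s : Set (ES d)} (hs : MeasurableSet s) (hsf : volume s < ⊤) :
    ∀ᵐ ω ∂P, IntegrableOn (fun x => F (τ x ω)) s volume := by
  set ν : Measure (ES d) := volume.restrict s with hν
  have hGm : StronglyMeasurable fun q : Ω × ES d => F (τ q.2 q.1) :=
    hFm.comp_measurable (hmeas.comp measurable_swap)
  have hint : Integrable (fun q : Ω × ES d => F (τ q.2 q.1)) (P.prod ν) := by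
    refine ⟨hGm.aestronglyMeasurable, ?_⟩
    rw [HasFiniteIntegral,
      lintegral_prod_symm _ ((hGm.measurable.enorm).aemeasurable)]
    have hslice : ∀ x : ES d, ∫⁻ ω, (‖F (τ x ω)‖₊ : ENNReal) ∂P
        = ∫⁻ ω, (‖F ω‖₊ : ENNReal) ∂P := fun x =>
      (hmp x).lintegral_comp hFm.measurable.enorm
    calc ∫⁻ x, ∫⁻ ω, (‖F (τ x ω)‖₊ : ENNReal) ∂P ∂ν
        = ∫⁻ _x, ∫⁻ ω, (‖F ω‖₊ : ENNReal) ∂P ∂ν := by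
          exact lintegral_congr fun x => hslice x
      _ = ν Set.univ * ∫⁻ ω, (‖F ω‖₊ : ENNReal) ∂P := by
          rw [lintegral_const, mul_comm]
      _ < ⊤ := by
          rw [hν, Measure.restrict_apply_univ]
          exact ENNReal.mul_lt_top hsf hFi.2
  exact hint.prod_right_ae

/-- Null sets are a.e. avoided by realizations. -/
lemma aux_null (hmp : ∀ x, MeasurePreserving (τ x) P P)
    (hmeas : Measurable fun q : ES d × Ω => τ q.1 q.2)
    {N : Set Ω} (hN : P N = 0) :
    ∀ᵐ ω ∂P, ∀ᵐ x : ES d ∂volume, τ x ω ∉ N := by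
  obtain ⟨N', hNN', hN'm, hN'0⟩ := exists_measurable_superset_of_null hN
  have hS : MeasurableSet {q : Ω × ES d | τ q.2 q.1 ∈ N'} :=
    (hmeas.comp measurable_swap) hN'm
  have hprod : (P.prod (volume : Measure (ES d))) {q : Ω × ES d | τ q.2 q.1 ∈ N'} = 0 := by
    rw [Measure.prod_apply_symm hS]
    have : ∀ x : ES d, P ((fun ω : Ω => (ω, x)) ⁻¹' {q : Ω × ES d | τ q.2 q.1 ∈ N'}) = 0 := by
      intro x
      have : ((fun ω : Ω => (ω, x)) ⁻¹' {q : Ω × ES d | τ q.2 q.1 ∈ N'}) = τ x ⁻¹' N' := rfl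
      rw [this, (hmp x).measure_preimage hN'm.nullMeasurableSet, hN'0]
    simp only [this]
    simp
  have hae : ∀ᵐ q : Ω × ES d ∂(P.prod volume), τ q.2 q.1 ∉ N' := by
    rw [ae_iff]
    simpa using hprod
  filter_upwards [Measure.ae_ae_of_ae_prod hae] with ω hω
  filter_upwards [hω] with x hx
  exact fun hmem => hx (hNN' hmem)

/-- Product of a locally integrable function with a continuous function vanishing
outside a compact set is integrable. -/
lemma int_mul {u φ : ES d → ℝ} {K : Set (ES d)} (hK : IsCompact K)
    (hu : IntegrableOn u K volume) (hum : AEStronglyMeasurable u volume)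
    (hφ : Continuous φ) (hφ0 : ∀ x ∉ K, φ x = 0) :
    Integrable (fun x => u x * φ x) volume := by
  obtain ⟨C, hC⟩ := hK.exists_bound_of_continuousOn hφ.continuousOn
  refine Integrable.mono' (IntegrableOn.integrable_indicator (hu.norm.mul_const C) hK.measurableSet)
    (hum.mul hφ.aestronglyMeasurable) (ae_of_all _ fun x => ?_)
  by_cases hx : x ∈ K
  · rw [Set.indicator_of_mem hx]
    calc ‖u x * φ x‖ = ‖u x‖ * ‖φ x‖ := by rw [norm_mul]
    _ ≤ ‖u x‖ * C := by
        exact mul_le_mul_of_nonneg_left (hC x hx) (norm_nonneg _)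
  · rw [Set.indicator_of_notMem hx, hφ0 x hx]
    simp

lemma single_eq_smul (i : Fin d) (t : ℝ) :
    EuclideanSpace.single i t = t • EuclideanSpace.single i 1 := by
  ext j; simp [EuclideanSpace.single_apply]

end Aux

section LemA

variable {d : ℕ} {Ω : Type*} [MeasurableSpace Ω]

/-- The core argument for a single fixed test function. -/
lemma lemA (P : Measure Ω) [IsProbabilityMeasure P] (τ : ES d → Ω → Ω)
    (hgrp : ∀ x y ω, τ x (τ y ω) = τ (x + y) ω)
    (hmp : ∀ x, MeasurePreserving (τ x) P P)
    (hmeas : Measurable fun q : ES d × Ω => τ q.1 q.2)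
    (f g : Ω → ℝ) (hfm : StronglyMeasurable f) (hgm : StronglyMeasurable g)
    (hfi : Integrable f P) (hgi : Integrable g P)
    (i : Fin d)
    (hD1 : Tendsto (fun h : ℝ =>
        eLpNorm (fun ω => h⁻¹ * (f (τ (EuclideanSpace.single i h) ω) - f ω) - g ω) 1 P)
      (nhdsWithin (0:ℝ) {(0:ℝ)}ᶜ) (nhds 0))
    (ψ : ES d → ℝ) (hψ : ContDiff ℝ 1 ψ) (hcs : HasCompactSupport ψ) :
    ∀ᵐ ω ∂P, ∫ x, f (τ x ω) * fderiv ℝ ψ x (EuclideanSpace.single i 1)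
        = - ∫ x, ψ x * g (τ x ω) := by
  classical
  have hτc : ∀ cvec : ES d, Measurable (τ cvec) := fun cvec =>
    hmeas.comp (measurable_const.prodMk measurable_id)
  set Q : ℝ → Ω → ℝ :=
    fun h ω => h⁻¹ * (f (τ (EuclideanSpace.single i h) ω) - f ω) - g ω with hQdef
  have hQm : ∀ h, StronglyMeasurable (Q h) := fun h =>
    ((((hfm.comp_measurable (hτc _)).sub hfm).const_mul _).sub hgm)
  -- support radius
  obtain ⟨R₀, hR₀⟩ := hcs.isBounded.subset_closedBall 0
  set R : ℝ := max R₀ 0 with hRdef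
  have hR : tsupport ψ ⊆ closedBall 0 R :=
    hR₀.trans (closedBall_subset_closedBall (le_max_left _ _))
  set B : Set (ES d) := closedBall (0 : ES d) (R + 1) with hBdef
  have hRB : closedBall (0 : ES d) R ⊆ B :=
    closedBall_subset_closedBall (by linarith)
  -- Lipschitz constant
  obtain ⟨L, hL⟩ := hψ.lipschitzWith_of_hasCompactSupport hcs one_ne_zero
  -- the sequence of difference parameters
  have hseq : ∀ n : ℕ, ∃ s : ℝ, s ≠ 0 ∧ |s| < 1/(n+1) ∧
      eLpNorm (Q s) 1 P < (2⁻¹ : ENNReal)^n := by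
    intro n
    have h1 : ∀ᶠ s : ℝ in nhdsWithin 0 {(0:ℝ)}ᶜ, eLpNorm (Q s) 1 P < (2⁻¹ : ENNReal)^n :=
      hD1.eventually_lt_const (ENNReal.pow_pos (by norm_num) n)
    have h2 : ∀ᶠ s : ℝ in nhdsWithin 0 {(0:ℝ)}ᶜ, |s| < 1/(n+1) := by
      apply eventually_nhdsWithin_of_eventually_nhds
      have hball : Metric.ball (0:ℝ) (1/(n+1)) ∈ nhds (0:ℝ) :=
        ball_mem_nhds _ (by positivity)
      filter_upwards [hball] with s hs
      simpa [Real.dist_eq] using hs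
    have h3 : ∀ᶠ s : ℝ in nhdsWithin (0:ℝ) {(0:ℝ)}ᶜ, s ≠ 0 := eventually_mem_nhdsWithin
    obtain ⟨s, hs3, hs2, hs1⟩ := (h3.and (h2.and h1)).exists
    exact ⟨s, hs3, hs2, hs1⟩
  choose t ht0 htlt hteLp using hseq
  have htt : Tendsto t atTop (nhds (0:ℝ)) := by
    have hub : Tendsto (fun n : ℕ => 1/((n:ℝ)+1)) atTop (nhds 0) :=
      tendsto_one_div_add_atTop_nhds_zero_nat
    have hlb : Tendsto (fun n : ℕ => -(1/((n:ℝ)+1))) atTop (nhds 0) := by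
      simpa using hub.neg
    refine tendsto_of_tendsto_of_tendsto_of_le_of_le hlb hub ?_ ?_
    · intro n; have := (abs_lt.mp (htlt n)).1; linarith
    · intro n; exact le_of_lt (abs_lt.mp (htlt n)).2
  set c : ℕ → ES d := fun n => EuclideanSpace.single i (t n) with hcdef
  have hcnorm : ∀ n, ‖c n‖ = |t n| := fun n => by
    rw [hcdef]; simp [EuclideanSpace.norm_single]
  have htle1 : ∀ n, |t n| ≤ 1 := by
    intro n
    refine le_trans (le_of_lt (htlt n)) ?_
    rw [div_le_one (by positivity)]
    exact le_add_of_nonneg_left (Nat.cast_nonneg n)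
  -- the L¹-control functions G n
  set G : ℕ → Ω → ENNReal := fun n ω =>
    ∫⁻ x : ES d, (‖ψ x‖₊ : ENNReal) * (‖Q (t n) (τ x ω)‖₊ : ENNReal) ∂volume with hGdef
  have hjm : ∀ n, Measurable (fun q : ES d × Ω =>
      (‖ψ q.1‖₊ : ENNReal) * (‖Q (t n) (τ q.1 q.2)‖₊ : ENNReal)) := fun n =>
    ((hψ.continuous.measurable.comp measurable_fst).enorm).mul
      ((((hQm (t n)).measurable.comp hmeas) : Measurable fun q : ES d × Ω => Q (t n) (τ q.1 q.2)).enorm)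
  have hGmeas : ∀ n, Measurable (G n) := fun n =>
    Measurable.lintegral_prod_left (hjm n)
  have hψlint : ∫⁻ x, (‖ψ x‖₊ : ENNReal) ∂(volume : Measure (ES d)) < ⊤ :=
    (hψ.continuous.integrable_of_hasCompactSupport hcs).2
  have hGint : ∀ n, ∫⁻ ω, G n ω ∂P ≤
      (∫⁻ x, (‖ψ x‖₊ : ENNReal) ∂(volume : Measure (ES d))) * (2⁻¹ : ENNReal)^n := by
    intro n
    have hswap : ∫⁻ ω, G n ω ∂P =
        ∫⁻ x : ES d, ∫⁻ ω, (‖ψ x‖₊ : ENNReal) * (‖Q (t n) (τ x ω)‖₊ : ENNReal) ∂P ∂volume := by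
      rw [hGdef]
      exact (lintegral_lintegral_swap
        (f := fun ω (x : ES d) => (‖ψ x‖₊ : ENNReal) * (‖Q (t n) (τ x ω)‖₊ : ENNReal))
        (((hjm n).comp measurable_swap).aemeasurable))
    rw [hswap]
    have hinner : ∀ x : ES d, ∫⁻ ω, (‖ψ x‖₊ : ENNReal) * (‖Q (t n) (τ x ω)‖₊ : ENNReal) ∂P
        = (‖ψ x‖₊ : ENNReal) * eLpNorm (Q (t n)) 1 P := by
      intro x
      have hm1 : Measurable fun ω' => (‖Q (t n) (τ x ω')‖₊ : ENNReal) :=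
        (((hQm (t n)).measurable.comp (hτc x)) : Measurable fun ω' => Q (t n) (τ x ω')).enorm
      have h1 : ∫⁻ ω', (‖Q (t n) (τ x ω')‖₊ : ENNReal) ∂P
          = ∫⁻ ω', (‖Q (t n) ω'‖₊ : ENNReal) ∂P :=
        (hmp x).lintegral_comp ((hQm (t n)).measurable.enorm)
      rw [lintegral_const_mul _ hm1, h1, eLpNorm_one_eq_lintegral_enorm]; rfl
    calc ∫⁻ x : ES d, ∫⁻ ω, (‖ψ x‖₊ : ENNReal) * (‖Q (t n) (τ x ω)‖₊ : ENNReal) ∂P ∂volume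
        = ∫⁻ x : ES d, (‖ψ x‖₊ : ENNReal) * eLpNorm (Q (t n)) 1 P ∂volume :=
          lintegral_congr hinner
      _ = (∫⁻ x, (‖ψ x‖₊ : ENNReal) ∂(volume : Measure (ES d))) * eLpNorm (Q (t n)) 1 P :=
          lintegral_mul_const _ (hψ.continuous.measurable.enorm)
      _ ≤ _ := mul_le_mul_right (le_of_lt (hteLp n)) _
  have hGsum : ∫⁻ ω, ∑' n, G n ω ∂P < ⊤ := by
    rw [lintegral_tsum (fun n => (hGmeas n).aemeasurable)]
    calc ∑' n, ∫⁻ ω, G n ω ∂P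
        ≤ ∑' n, (∫⁻ x, (‖ψ x‖₊ : ENNReal) ∂(volume : Measure (ES d))) * (2⁻¹ : ENNReal)^n :=
          ENNReal.tsum_le_tsum hGint
      _ = (∫⁻ x, (‖ψ x‖₊ : ENNReal) ∂(volume : Measure (ES d))) * ∑' n, (2⁻¹ : ENNReal)^n :=
          ENNReal.tsum_mul_left
      _ < ⊤ := by
          apply ENNReal.mul_lt_top hψlint
          rw [ENNReal.tsum_geometric, ENNReal.one_sub_inv_two]
          simp
  have hGfin : ∀ᵐ ω ∂P, ∑' n, G n ω < ⊤ :=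
    ae_lt_top (Measurable.ennreal_tsum hGmeas) hGsum.ne
  -- a.e. integrability of realizations
  have hBmeas : MeasurableSet B := measurableSet_closedBall
  have hBvol : volume B < ⊤ := measure_closedBall_lt_top
  have hIu := aux_int P τ hmp hmeas hfm hfi hBmeas hBvol
  have hIv := aux_int P τ hmp hmeas hgm hgi hBmeas hBvol
  filter_upwards [hIu, hIv, hGfin] with ω hu hv hGω
  -- fixed good ω
  set u : ES d → ℝ := fun x => f (τ x ω) with hudef
  set v : ES d → ℝ := fun x => g (τ x ω) with hvdef
  have hum : Measurable u := hfm.measurable.comp (meas_slice τ hmeas ω)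
  have hvm : Measurable v := hgm.measurable.comp (meas_slice τ hmeas ω)
  have hψ0 : ∀ x ∉ B, ψ x = 0 := fun x hx =>
    image_eq_zero_of_notMem_tsupport (fun hmem => hx (hRB (hR hmem)))
  have hψc0 : ∀ n, ∀ x ∉ B, ψ (x - c n) = 0 := by
    intro n x hx
    apply image_eq_zero_of_notMem_tsupport
    intro hmem
    apply hx
    have h1 : ‖x - c n‖ ≤ R := by
      have := hR hmem
      rwa [mem_closedBall_zero_iff] at this
    rw [hBdef, mem_closedBall_zero_iff]
    calc ‖x‖ = ‖(x - c n) + c n‖ := by rw [sub_add_cancel]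
      _ ≤ ‖x - c n‖ + ‖c n‖ := norm_add_le _ _
      _ ≤ R + 1 := add_le_add h1 (by rw [hcnorm]; exact htle1 n)
  have key_int : ∀ φ : ES d → ℝ, Continuous φ → (∀ x ∉ B, φ x = 0) →
      Integrable (fun x => u x * φ x) volume := fun φ h1 h2 =>
    int_mul (isCompact_closedBall _ _) hu hum.aestronglyMeasurable h1 h2
  have hintuψc : ∀ n, Integrable (fun x => u x * ψ (x - c n)) volume := fun n =>
    key_int _ (hψ.continuous.comp (continuous_id.sub continuous_const)) (hψc0 n)
  have hintuψ : Integrable (fun x => u x * ψ x) volume := key_int _ hψ.continuous hψ0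
  have hintvψ : Integrable (fun x => v x * ψ x) volume :=
    int_mul (isCompact_closedBall _ _) hv hvm.aestronglyMeasurable hψ.continuous hψ0
  have hintuψc' : ∀ n, Integrable (fun x => u (x + c n) * ψ x) volume := by
    intro n
    have h := (hintuψc n).comp_add_right (c n)
    simpa using h
  -- the discrete integration-by-parts identity
  have hiden : ∀ n, ∫ x, u x * ((t n)⁻¹ * (ψ (x - c n) - ψ x))
      = (∫ x, ψ x * Q (t n) (τ x ω)) + ∫ x, v x * ψ x := by
    intro n
    have e1 : ∫ x, u x * ψ (x - c n) = ∫ x, u (x + c n) * ψ x := by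
      have h := integral_add_right_eq_self (μ := (volume : Measure (ES d)))
        (fun y => u (y + c n) * ψ y) (-(c n))
      simpa [sub_eq_add_neg] using h
    have lhs_eq : ∫ x, u x * ((t n)⁻¹ * (ψ (x - c n) - ψ x))
        = (t n)⁻¹ * (∫ x, u (x + c n) * ψ x) - (t n)⁻¹ * ∫ x, u x * ψ x := by
      have expand : (fun x => u x * ((t n)⁻¹ * (ψ (x - c n) - ψ x)))
          = fun x => (t n)⁻¹ * (u x * ψ (x - c n)) - (t n)⁻¹ * (u x * ψ x) := by
        funext x; ring
      have hA : Integrable (fun x => (t n)⁻¹ * (u x * ψ (x - c n))) volume :=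
        (hintuψc n).const_mul _
      have hB : Integrable (fun x => (t n)⁻¹ * (u x * ψ x)) volume :=
        hintuψ.const_mul _
      rw [expand, integral_sub hA hB, integral_const_mul, integral_const_mul, e1]
    have e2 : (fun x => ψ x * Q (t n) (τ x ω))
        = fun x => (t n)⁻¹ * (u (x + c n) * ψ x) - (t n)⁻¹ * (u x * ψ x) - v x * ψ x := by
      funext x
      have : Q (t n) (τ x ω) = (t n)⁻¹ * (u (x + c n) - u x) - v x := by
        rw [hQdef]
        simp only [hudef, hvdef]
        rw [hgrp, add_comm]
      rw [this]; ring
    have rhs_eq : ∫ x, ψ x * Q (t n) (τ x ω)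
        = (t n)⁻¹ * (∫ x, u (x + c n) * ψ x) - (t n)⁻¹ * (∫ x, u x * ψ x)
          - ∫ x, v x * ψ x := by
      have hA : Integrable (fun x => (t n)⁻¹ * (u (x + c n) * ψ x)) volume :=
        (hintuψc' n).const_mul _
      have hB : Integrable (fun x => (t n)⁻¹ * (u x * ψ x)) volume :=
        hintuψ.const_mul _
      have hAB : Integrable
          (fun x => (t n)⁻¹ * (u (x + c n) * ψ x) - (t n)⁻¹ * (u x * ψ x)) volume :=
        hA.sub hB
      rw [e2, integral_sub hAB hintvψ, integral_sub hA hB,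
        integral_const_mul, integral_const_mul]
    rw [lhs_eq, rhs_eq]; ring
  -- the error term tends to zero
  have hGn_fin : ∀ n, G n ω < ⊤ := fun n => lt_of_le_of_lt (ENNReal.le_tsum n) hGω
  have hG0 : Tendsto (fun n => G n ω) atTop (nhds 0) :=
    ENNReal.tendsto_atTop_zero_of_tsum_ne_top hGω.ne
  have hΦ0 : Tendsto (fun n => ∫ x, ψ x * Q (t n) (τ x ω)) atTop (nhds 0) := by
    rw [tendsto_zero_iff_norm_tendsto_zero]
    have hbound : ∀ n, ‖∫ x, ψ x * Q (t n) (τ x ω)‖ ≤ (G n ω).toReal := by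
      intro n
      have h1 : (‖∫ x, ψ x * Q (t n) (τ x ω)‖₊ : ENNReal) ≤ G n ω := by
        refine le_trans (enorm_integral_le_lintegral_enorm _) ?_
        rw [hGdef]
        refine lintegral_mono fun x => ?_
        exact (enorm_mul _ _).le
      have := ENNReal.toReal_mono (hGn_fin n).ne h1
      simpa using this
    refine squeeze_zero (fun n => norm_nonneg _) hbound ?_
    have := (ENNReal.tendsto_toReal (a := 0) (by simp)).comp hG0
    exact this
  -- dominated convergence for the left-hand side
  set v₀ : ES d := EuclideanSpace.single i 1 with hv₀def
  have hDCT : Tendsto (fun n => ∫ x, u x * ((t n)⁻¹ * (ψ (x - c n) - ψ x))) atTop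
      (nhds (∫ x, u x * (-(fderiv ℝ ψ x v₀)))) := by
    refine tendsto_integral_of_dominated_convergence
      (bound := B.indicator (fun x => ‖u x‖ * (L : ℝ))) ?_ ?_ ?_ ?_
    · intro n
      exact hum.aestronglyMeasurable.mul
        ((continuous_const.mul ((hψ.continuous.comp (continuous_id.sub continuous_const)).sub
          hψ.continuous)).aestronglyMeasurable)
    · exact IntegrableOn.integrable_indicator (hu.norm.mul_const _) hBmeas
    · intro n
      refine ae_of_all _ fun x => ?_
      by_cases hx : x ∈ B
      · rw [Set.indicator_of_mem hx]
        have hd : ‖ψ (x - c n) - ψ x‖ ≤ (L : ℝ) * |t n| := by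
          have := hL.dist_le_mul (x - c n) x
          rw [dist_eq_norm] at this
          have hnc : dist (x - c n) x = |t n| := by
            rw [dist_eq_norm]
            simp [hcnorm n]
          rw [dist_eq_norm] at hnc
          rw [← Real.norm_eq_abs] at hnc ⊢
          calc ‖ψ (x - c n) - ψ x‖ ≤ (L : ℝ) * ‖x - c n - x‖ := by
                rw [← dist_eq_norm, ← dist_eq_norm]; exact hL.dist_le_mul _ _
            _ = (L : ℝ) * ‖t n‖ := by rw [hnc]
        have ht0n : |t n| ≠ 0 := fun h => ht0 n (abs_eq_zero.mp h)
        calc ‖u x * ((t n)⁻¹ * (ψ (x - c n) - ψ x))‖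
            = ‖u x‖ * (|t n|⁻¹ * ‖ψ (x - c n) - ψ x‖) := by
              rw [norm_mul, norm_mul, Real.norm_eq_abs (t n)⁻¹, abs_inv]
          _ ≤ ‖u x‖ * (|t n|⁻¹ * ((L : ℝ) * |t n|)) := by
              refine mul_le_mul_of_nonneg_left (mul_le_mul_of_nonneg_left hd ?_) (norm_nonneg _)
              positivity
          _ = ‖u x‖ * (L : ℝ) := by
              field_simp
      · rw [Set.indicator_of_notMem hx, hψc0 n x hx, hψ0 x hx]
        simp
    · refine ae_of_all _ fun x => ?_
      have hdiff := (hψ.differentiable one_ne_zero x).hasFDerivAt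
      have hγ : HasDerivAt (fun s : ℝ => x + s • (-v₀)) (-v₀) 0 := by
        have h1 : HasDerivAt (fun s : ℝ => s • (-v₀)) ((1:ℝ) • (-v₀)) 0 :=
          (hasDerivAt_id (0:ℝ)).smul_const (-v₀)
        simpa using h1.const_add x
      have hcomp : HasDerivAt (fun s : ℝ => ψ (x + s • (-v₀))) (fderiv ℝ ψ x (-v₀)) 0 := by
        have hx0 : x + (0:ℝ) • (-v₀) = x := by simp
        have := HasFDerivAt.comp_hasDerivAt (0:ℝ) (by rw [hx0]; exact hdiff) hγ
        simpa [Function.comp_def] using this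
      have hslope := hasDerivAt_iff_tendsto_slope.mp hcomp
      have htn : Tendsto t atTop (nhdsWithin (0:ℝ) {(0:ℝ)}ᶜ) :=
        tendsto_nhdsWithin_of_tendsto_nhds_of_eventually_within _ htt
          (Eventually.of_forall fun n => ht0 n)
      have hcomp2 := hslope.comp htn
      have heq : ∀ n, slope (fun s : ℝ => ψ (x + s • (-v₀))) 0 (t n)
          = (t n)⁻¹ * (ψ (x - c n) - ψ x) := by
        intro n
        rw [slope_def_field]
        have hc' : c n = (t n) • v₀ := single_eq_smul i (t n)
        have hxc : x + (t n) • (-v₀) = x - c n := by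
          rw [hc', smul_neg, ← sub_eq_add_neg]
        rw [hxc]
        simp [div_eq_inv_mul]
      have hfinal : Tendsto (fun n => (t n)⁻¹ * (ψ (x - c n) - ψ x)) atTop
          (nhds (-(fderiv ℝ ψ x v₀))) := by
        have : fderiv ℝ ψ x (-v₀) = -(fderiv ℝ ψ x v₀) := by
          rw [map_neg]
        rw [← this]
        exact hcomp2.congr heq
      exact hfinal.const_mul (u x)
  -- combine
  have hRHS : Tendsto (fun n => (∫ x, ψ x * Q (t n) (τ x ω)) + ∫ x, v x * ψ x) atTop
      (nhds (∫ x, v x * ψ x)) := by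
    have := hΦ0.add_const (∫ x, v x * ψ x)
    simpa using this
  have hkey : ∫ x, u x * (-(fderiv ℝ ψ x v₀)) = ∫ x, v x * ψ x := by
    refine tendsto_nhds_unique ?_ hRHS
    refine hDCT.congr fun n => hiden n
  have hneg : ∫ x, u x * (-(fderiv ℝ ψ x v₀)) = - ∫ x, u x * fderiv ℝ ψ x v₀ := by
    rw [← integral_neg]
    congr 1
    funext x
    ring
  have hcomm : ∫ x, ψ x * v x = ∫ x, v x * ψ x := by
    congr 1; funext x; ring
  rw [hcomm]
  rw [hneg] at hkey
  linarith

end LemA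

section LemB

variable {d : ℕ}

/-- Passing to the limit in integrals against uniformly convergent test functions. -/
lemma lemB {u : ES d → ℝ} {K : Set (ES d)} (hK : IsCompact K) (hKm : MeasurableSet K)
    (hu : IntegrableOn u K volume) (hum : AEStronglyMeasurable u (volume : Measure (ES d)))
    (φk : ℕ → ES d → ℝ) (φ : ES d → ℝ)
    (hφkc : ∀ k, Continuous (φk k)) (hφc : Continuous φ)
    (hφk0 : ∀ k, ∀ x ∉ K, φk k x = 0) (hφ0 : ∀ x ∉ K, φ x = 0)
    (hconv : TendstoUniformlyOn (fun k x => φk k x) φ atTop K) :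
    Tendsto (fun k => ∫ x, u x * φk k x) atTop (nhds (∫ x, u x * φ x)) := by
  have hIk : ∀ k, Integrable (fun x => u x * φk k x) volume := fun k =>
    int_mul hK hu hum (hφkc k) (hφk0 k)
  have hI : Integrable (fun x => u x * φ x) volume := int_mul hK hu hum hφc hφ0
  have hzero : Tendsto (fun k => (∫ x, u x * φk k x) - ∫ x, u x * φ x) atTop (nhds 0) := by
    rw [NormedAddCommGroup.tendsto_nhds_zero]
    intro ε hε
    set C : ℝ := (∫ x in K, ‖u x‖) + 1 with hCdef
    have hC0 : 0 < C := by
      have : 0 ≤ ∫ x in K, ‖u x‖ := integral_nonneg fun x => norm_nonneg _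
      rw [hCdef]; linarith
    have hεC : 0 < ε / C := div_pos hε hC0
    filter_upwards [Metric.tendstoUniformlyOn_iff.mp hconv (ε / C) hεC] with k hk
    have hdiff : (∫ x, u x * φk k x) - (∫ x, u x * φ x)
        = ∫ x, u x * (φk k x - φ x) := by
      have h : ∫ x, (u x * φk k x - u x * φ x)
          = (∫ x, u x * φk k x) - ∫ x, u x * φ x := integral_sub (hIk k) hI
      rw [← h]
      congr 1; funext x; ring
    rw [hdiff]
    have hb1 : ‖∫ x, u x * (φk k x - φ x)‖ ≤ ∫ x, ‖u x * (φk k x - φ x)‖ :=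
      norm_integral_le_integral_norm _
    have hb2 : ∫ x, ‖u x * (φk k x - φ x)‖
        = ∫ x in K, ‖u x * (φk k x - φ x)‖ := by
      refine (setIntegral_eq_integral_of_forall_compl_eq_zero fun x hx => ?_).symm
      rw [hφk0 k x hx, hφ0 x hx]
      simp
    have hb3 : ∫ x in K, ‖u x * (φk k x - φ x)‖ ≤ ∫ x in K, ‖u x‖ * (ε / C) := by
      refine setIntegral_mono_on ?_ ?_ hKm ?_
      · have : Integrable (fun x => u x * (φk k x - φ x)) volume :=
          int_mul hK hu hum ((hφkc k).sub hφc)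
            (fun x hx => by rw [hφk0 k x hx, hφ0 x hx]; ring)
        exact this.norm.integrableOn
      · exact hu.norm.mul_const _
      · intro x hx
        rw [norm_mul]
        refine mul_le_mul_of_nonneg_left ?_ (norm_nonneg _)
        have := hk x hx
        rw [dist_eq_norm] at this
        rw [← norm_neg]
        simpa [neg_sub] using le_of_lt this
    have hb4 : ∫ x in K, ‖u x‖ * (ε / C) = (∫ x in K, ‖u x‖) * (ε / C) :=
      integral_mul_const _ _
    have hb5 : (∫ x in K, ‖u x‖) * (ε / C) < ε := by
      have h1 : (∫ x in K, ‖u x‖) < C := by rw [hCdef]; linarith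
      calc (∫ x in K, ‖u x‖) * (ε / C) < C * (ε / C) :=
            mul_lt_mul_of_pos_right h1 hεC
        _ = ε := by field_simp
    calc ‖∫ x, u x * (φk k x - φ x)‖ ≤ ∫ x in K, ‖u x‖ * (ε / C) :=
          le_trans hb1 (le_of_eq hb2 |>.trans hb3)
      _ < ε := by rw [hb4]; exact hb5
  have h2 := hzero.add_const (∫ x, u x * φ x)
  have heq : ∀ k, ((∫ x, u x * φk k x) - ∫ x, u x * φ x) + ∫ x, u x * φ x
      = ∫ x, u x * φk k x := fun k => by ring
  have h3 := h2.congr heq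
  simpa using h3

end LemB

/-- **Realizations of stochastic Sobolev functions have the expected weak derivatives**
(Section 9.1 of the paper).  If `f ∈ L^p(Ω;P)` has `i`-th stochastic derivative
`g ∈ L^p(Ω;P)` (the difference quotients along `e_i` converge to `g` in `L^p`), then for
`P`-a.e. `ω` and every `ψ ∈ C¹_c(ℝ^d)`:
`∫ f(τ_x ω) ∂_i ψ(x) dx = − ∫ ψ(x) g(τ_x ω) dx`. -/
theorem stmt14 (d : ℕ) {Ω : Type*} [MeasurableSpace Ω]
    (P : Measure Ω) [IsProbabilityMeasure P]
    (τ : EuclideanSpace ℝ (Fin d) → Ω → Ω)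
    (hbij : ∀ x, Function.Bijective (τ x))
    (hgrp : ∀ x y ω, τ x (τ y ω) = τ (x + y) ω)
    (hzero : ∀ ω, τ 0 ω = ω)
    (hmp : ∀ x, MeasurePreserving (τ x) P P)
    (hmeas : Measurable fun q : EuclideanSpace ℝ (Fin d) × Ω => τ q.1 q.2)
    (p : ℝ) (hp : 1 ≤ p)
    (f g : Ω → ℝ)
    (hf : MemLp f (ENNReal.ofReal p) P) (hg : MemLp g (ENNReal.ofReal p) P)
    (i : Fin d)
    (hD : Tendsto (fun h : ℝ =>
        eLpNorm (fun ω => h⁻¹ * (f (τ (EuclideanSpace.single i h) ω) - f ω) - g ω)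
          (ENNReal.ofReal p) P)
      (nhdsWithin (0:ℝ) {(0:ℝ)}ᶜ) (nhds 0)) :
    ∀ᵐ ω ∂P, ∀ ψ : EuclideanSpace ℝ (Fin d) → ℝ,
      ContDiff ℝ 1 ψ → HasCompactSupport ψ →
      ∫ x, f (τ x ω) * fderiv ℝ ψ x (EuclideanSpace.single i 1) =
        - ∫ x, ψ x * g (τ x ω) := by
  classical
  set v₀ : EuclideanSpace ℝ (Fin d) := EuclideanSpace.single i 1 with hv₀def
  have hτc : ∀ cvec : EuclideanSpace ℝ (Fin d), Measurable (τ cvec) := fun cvec =>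
    hmeas.comp (measurable_const.prodMk measurable_id)
  have hp1 : (1 : ENNReal) ≤ ENNReal.ofReal p := ENNReal.one_le_ofReal.mpr hp
  -- measurable representatives
  set f' : Ω → ℝ := hf.1.mk f with hf'def
  set g' : Ω → ℝ := hg.1.mk g with hg'def
  have hff' : f =ᵐ[P] f' := hf.1.ae_eq_mk
  have hgg' : g =ᵐ[P] g' := hg.1.ae_eq_mk
  have hf'm : StronglyMeasurable f' := hf.1.stronglyMeasurable_mk
  have hg'm : StronglyMeasurable g' := hg.1.stronglyMeasurable_mk
  have hf'p : MemLp f' (ENNReal.ofReal p) P :=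
    ⟨hf'm.aestronglyMeasurable, by rw [← eLpNorm_congr_ae hff']; exact hf.2⟩
  have hg'p : MemLp g' (ENNReal.ofReal p) P :=
    ⟨hg'm.aestronglyMeasurable, by rw [← eLpNorm_congr_ae hgg']; exact hg.2⟩
  have hf'i : Integrable f' P :=
    memLp_one_iff_integrable.mp (hf'p.mono_exponent hp1)
  have hg'i : Integrable g' P :=
    memLp_one_iff_integrable.mp (hg'p.mono_exponent hp1)
  -- transfer the difference-quotient convergence to the representatives, at exponent 1
  have hQae : ∀ h : ℝ,
      (fun ω => h⁻¹ * (f (τ (EuclideanSpace.single i h) ω) - f ω) - g ω)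
        =ᵐ[P] (fun ω => h⁻¹ * (f' (τ (EuclideanSpace.single i h) ω) - f' ω) - g' ω) := by
    intro h
    have h1 : (fun ω => f (τ (EuclideanSpace.single i h) ω))
        =ᵐ[P] (fun ω => f' (τ (EuclideanSpace.single i h) ω)) :=
      (hmp (EuclideanSpace.single i h)).quasiMeasurePreserving.ae_eq hff'
    filter_upwards [h1, hff', hgg'] with ω e1 e2 e3
    rw [e1, e2, e3]
  have hQ'm : ∀ h : ℝ, StronglyMeasurable
      (fun ω => h⁻¹ * (f' (τ (EuclideanSpace.single i h) ω) - f' ω) - g' ω) := fun h =>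
    ((((hf'm.comp_measurable (hτc _)).sub hf'm).const_mul _).sub hg'm)
  have hD1 : Tendsto (fun h : ℝ =>
      eLpNorm (fun ω => h⁻¹ * (f' (τ (EuclideanSpace.single i h) ω) - f' ω) - g' ω) 1 P)
      (nhdsWithin (0:ℝ) {(0:ℝ)}ᶜ) (nhds 0) := by
    have hle : ∀ h : ℝ,
        eLpNorm (fun ω => h⁻¹ * (f' (τ (EuclideanSpace.single i h) ω) - f' ω) - g' ω) 1 P
        ≤ eLpNorm (fun ω => h⁻¹ * (f (τ (EuclideanSpace.single i h) ω) - f ω) - g ω)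
            (ENNReal.ofReal p) P := by
      intro h
      calc eLpNorm (fun ω => h⁻¹ * (f' (τ (EuclideanSpace.single i h) ω) - f' ω) - g' ω) 1 P
          ≤ eLpNorm (fun ω => h⁻¹ * (f' (τ (EuclideanSpace.single i h) ω) - f' ω) - g' ω)
              (ENNReal.ofReal p) P :=
            eLpNorm_le_eLpNorm_of_exponent_le hp1 (hQ'm h).aestronglyMeasurable
        _ = eLpNorm (fun ω => h⁻¹ * (f (τ (EuclideanSpace.single i h) ω) - f ω) - g ω)
              (ENNReal.ofReal p) P := eLpNorm_congr_ae (hQae h).symm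
    exact tendsto_of_tendsto_of_tendsto_of_le_of_le tendsto_const_nhds hD
      (fun h => zero_le) hle
  -- countable dense families of test pairs
  set X : ℕ → Set (C(EuclideanSpace ℝ (Fin d), ℝ) × C(EuclideanSpace ℝ (Fin d), ℝ)) :=
    fun n => {q | ∃ ψ : EuclideanSpace ℝ (Fin d) → ℝ, ContDiff ℝ 1 ψ ∧
      (∀ x ∉ Metric.closedBall (0 : EuclideanSpace ℝ (Fin d)) (n:ℝ), ψ x = 0) ∧
      (∀ x, q.1 x = ψ x) ∧ (∀ x, q.2 x = fderiv ℝ ψ x v₀)} with hXdef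
  have hsep : ∀ n : ℕ, ∃ T : Set (C(EuclideanSpace ℝ (Fin d), ℝ) × C(EuclideanSpace ℝ (Fin d), ℝ)),
      T.Countable ∧ T ⊆ X n ∧ X n ⊆ closure T := by
    intro n
    obtain ⟨T₀, hT₀c, hT₀d⟩ := TopologicalSpace.exists_countable_dense (X n)
    refine ⟨Subtype.val '' T₀, hT₀c.image _, ?_, ?_⟩
    · rintro q ⟨q', _, rfl⟩; exact q'.2
    · intro q hq
      have h1 : (⟨q, hq⟩ : X n) ∈ closure T₀ := hT₀d _
      exact closure_subtype.mp h1
  choose T hTc hTX hTd using hsep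
  -- a.e. events
  have hnullN : P ({ω | f ω ≠ f' ω} ∪ {ω | g ω ≠ g' ω}) = 0 :=
    measure_union_null (ae_iff.mp hff') (ae_iff.mp hgg')
  have htrans := aux_null P τ hmp hmeas hnullN
  have hIu : ∀ᵐ ω ∂P, ∀ n : ℕ, IntegrableOn (fun x => f' (τ x ω))
      (Metric.closedBall 0 (n:ℝ)) volume := by
    rw [ae_all_iff]
    intro n
    exact aux_int P τ hmp hmeas hf'm hf'i measurableSet_closedBall measure_closedBall_lt_top
  have hIv : ∀ᵐ ω ∂P, ∀ n : ℕ, IntegrableOn (fun x => g' (τ x ω))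
      (Metric.closedBall 0 (n:ℝ)) volume := by
    rw [ae_all_iff]
    intro n
    exact aux_int P τ hmp hmeas hg'm hg'i measurableSet_closedBall measure_closedBall_lt_top
  have hTeq : ∀ᵐ ω ∂P, ∀ n : ℕ, ∀ q ∈ T n,
      (∫ x, f' (τ x ω) * (q.2 : C(EuclideanSpace ℝ (Fin d), ℝ)) x)
        = - ∫ x, (q.1 : C(EuclideanSpace ℝ (Fin d), ℝ)) x * g' (τ x ω) := by
    rw [ae_all_iff]
    intro n
    rw [ae_ball_iff (hTc n)]
    intro q hq
    obtain ⟨ψq, hψq, hψq0, hq1, hq2⟩ := hTX n hq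
    have hcsq : HasCompactSupport ψq :=
      HasCompactSupport.intro (isCompact_closedBall _ _) hψq0
    have hA := lemA P τ hgrp hmp hmeas f' g' hf'm hg'm hf'i hg'i i hD1 ψq hψq hcsq
    filter_upwards [hA] with ω hω
    have e1 : (fun x => f' (τ x ω) * (q.2 : C(EuclideanSpace ℝ (Fin d), ℝ)) x)
        = fun x => f' (τ x ω) * fderiv ℝ ψq x v₀ := funext fun x => by rw [hq2 x]
    have e2 : (fun x => (q.1 : C(EuclideanSpace ℝ (Fin d), ℝ)) x * g' (τ x ω))
        = fun x => ψq x * g' (τ x ω) := funext fun x => by rw [hq1 x]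
    rw [e1, e2]
    exact hω
  -- combine everything
  filter_upwards [htrans, hIu, hIv, hTeq] with ω hωN hun hvn hT'
  intro ψ hψc hψcs
  have hcong1 : ∫ x, f (τ x ω) * fderiv ℝ ψ x v₀ = ∫ x, f' (τ x ω) * fderiv ℝ ψ x v₀ := by
    refine integral_congr_ae ?_
    filter_upwards [hωN] with x hx
    have hfe : f (τ x ω) = f' (τ x ω) := by
      by_contra hne; exact hx (Or.inl hne)
    rw [hfe]
  have hcong2 : ∫ x, ψ x * g (τ x ω) = ∫ x, ψ x * g' (τ x ω) := by
    refine integral_congr_ae ?_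
    filter_upwards [hωN] with x hx
    have hge : g (τ x ω) = g' (τ x ω) := by
      by_contra hne; exact hx (Or.inr hne)
    rw [hge]
  rw [hcong1, hcong2]
  -- pick the radius
  obtain ⟨r, hr⟩ := hψcs.isBounded.subset_closedBall 0
  set n : ℕ := ⌈max r 0⌉₊ with hndef
  have hsub : tsupport ψ ⊆ Metric.closedBall 0 (n:ℝ) :=
    hr.trans (closedBall_subset_closedBall ((le_max_left _ _).trans (Nat.le_ceil _)))
  have hψ0 : ∀ x ∉ Metric.closedBall (0 : EuclideanSpace ℝ (Fin d)) (n:ℝ), ψ x = 0 :=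
    fun x hx => image_eq_zero_of_notMem_tsupport (fun hm => hx (hsub hm))
  have hfd0 : ∀ x ∉ Metric.closedBall (0 : EuclideanSpace ℝ (Fin d)) (n:ℝ),
      fderiv ℝ ψ x v₀ = 0 := by
    intro x hx
    have hz : fderiv ℝ ψ x = 0 := by
      by_contra h
      exact hx (hsub (support_fderiv_subset ℝ h))
    rw [hz]; rfl
  have hfdcont : Continuous fun x => fderiv ℝ ψ x v₀ :=
    (ContinuousLinearMap.apply ℝ ℝ v₀).continuous.comp (hψc.continuous_fderiv one_ne_zero)
  set Ψp : C(EuclideanSpace ℝ (Fin d), ℝ) × C(EuclideanSpace ℝ (Fin d), ℝ) :=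
    (⟨ψ, hψc.continuous⟩, ⟨fun x => fderiv ℝ ψ x v₀, hfdcont⟩) with hΨpdef
  have hmem : Ψp ∈ X n := ⟨ψ, hψc, hψ0, fun x => rfl, fun x => rfl⟩
  obtain ⟨q, hqT, hqtend⟩ := mem_closure_iff_seq_limit.mp (hTd n hmem)
  -- vanishing of the approximants outside the ball
  have hk1 : ∀ k, ∀ x ∉ Metric.closedBall (0 : EuclideanSpace ℝ (Fin d)) (n:ℝ),
      ((q k).1 : C(EuclideanSpace ℝ (Fin d), ℝ)) x = 0 := by
    intro k
    obtain ⟨ψk, _, h0, h1, _⟩ := hTX n (hqT k)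
    intro x hx
    rw [h1 x]; exact h0 x hx
  have hk2 : ∀ k, ∀ x ∉ Metric.closedBall (0 : EuclideanSpace ℝ (Fin d)) (n:ℝ),
      ((q k).2 : C(EuclideanSpace ℝ (Fin d), ℝ)) x = 0 := by
    intro k
    obtain ⟨ψk, _, h0, _, h2⟩ := hTX n (hqT k)
    intro x hx
    rw [h2 x]
    have hts : tsupport ψk ⊆ Metric.closedBall 0 (n:ℝ) :=
      closure_minimal (fun y hy => by
        by_contra hy'
        exact hy (h0 y hy')) Metric.isClosed_closedBall
    have hz : fderiv ℝ ψk x = 0 := by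
      by_contra h
      exact hx (hts (support_fderiv_subset ℝ h))
    rw [hz]; rfl
  -- uniform convergence on the closed ball
  have hq1t : Tendsto (fun k => (q k).1) atTop (nhds Ψp.1) := (continuous_fst.tendsto Ψp).comp hqtend
  have hq2t : Tendsto (fun k => (q k).2) atTop (nhds Ψp.2) := (continuous_snd.tendsto Ψp).comp hqtend
  have hU1 : TendstoUniformlyOn (fun k x => ((q k).1 : C(EuclideanSpace ℝ (Fin d), ℝ)) x)
      (fun x => ψ x) atTop (Metric.closedBall 0 (n:ℝ)) :=
    (ContinuousMap.tendsto_iff_forall_isCompact_tendstoUniformlyOn.mp hq1t) _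
      (isCompact_closedBall _ _)
  have hU2 : TendstoUniformlyOn (fun k x => ((q k).2 : C(EuclideanSpace ℝ (Fin d), ℝ)) x)
      (fun x => fderiv ℝ ψ x v₀) atTop (Metric.closedBall 0 (n:ℝ)) :=
    (ContinuousMap.tendsto_iff_forall_isCompact_tendstoUniformlyOn.mp hq2t) _
      (isCompact_closedBall _ _)
  -- limits of both sides
  have humeas : AEStronglyMeasurable (fun x => f' (τ x ω)) (volume : Measure (EuclideanSpace ℝ (Fin d))) :=
    (hf'm.measurable.comp (meas_slice τ hmeas ω)).aestronglyMeasurable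
  have hvmeas : AEStronglyMeasurable (fun x => g' (τ x ω)) (volume : Measure (EuclideanSpace ℝ (Fin d))) :=
    (hg'm.measurable.comp (meas_slice τ hmeas ω)).aestronglyMeasurable
  have hLim1 : Tendsto (fun k => ∫ x, f' (τ x ω) * ((q k).2 : C(EuclideanSpace ℝ (Fin d), ℝ)) x)
      atTop (nhds (∫ x, f' (τ x ω) * fderiv ℝ ψ x v₀)) :=
    lemB (isCompact_closedBall _ _) measurableSet_closedBall (hun n) humeas
      (fun k x => ((q k).2 : C(EuclideanSpace ℝ (Fin d), ℝ)) x) (fun x => fderiv ℝ ψ x v₀)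
      (fun k => (q k).2.continuous) hfdcont hk2 hfd0 hU2
  have hLim2' : Tendsto (fun k => ∫ x, g' (τ x ω) * ((q k).1 : C(EuclideanSpace ℝ (Fin d), ℝ)) x)
      atTop (nhds (∫ x, g' (τ x ω) * ψ x)) :=
    lemB (isCompact_closedBall _ _) measurableSet_closedBall (hvn n) hvmeas
      (fun k x => ((q k).1 : C(EuclideanSpace ℝ (Fin d), ℝ)) x) (fun x => ψ x)
      (fun k => (q k).1.continuous) hψc.continuous hk1 hψ0 hU1
  have hLim2 : Tendsto (fun k => ∫ x, ((q k).1 : C(EuclideanSpace ℝ (Fin d), ℝ)) x * g' (τ x ω))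
      atTop (nhds (∫ x, ψ x * g' (τ x ω))) := by
    have e4 : ∀ k, ∫ x, g' (τ x ω) * ((q k).1 : C(EuclideanSpace ℝ (Fin d), ℝ)) x
        = ∫ x, ((q k).1 : C(EuclideanSpace ℝ (Fin d), ℝ)) x * g' (τ x ω) := by
      intro k
      have : (fun x => g' (τ x ω) * ((q k).1 : C(EuclideanSpace ℝ (Fin d), ℝ)) x)
          = fun x => ((q k).1 : C(EuclideanSpace ℝ (Fin d), ℝ)) x * g' (τ x ω) :=
        funext fun x => mul_comm _ _
      rw [this]
    have e5 : (∫ x, g' (τ x ω) * ψ x) = ∫ x, ψ x * g' (τ x ω) := by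
      have : (fun x => g' (τ x ω) * ψ x) = fun x => ψ x * g' (τ x ω) :=
        funext fun x => mul_comm _ _
      rw [this]
    rw [← e5]
    exact hLim2'.congr e4
  have hEq : ∀ k, ∫ x, f' (τ x ω) * ((q k).2 : C(EuclideanSpace ℝ (Fin d), ℝ)) x
      = - ∫ x, ((q k).1 : C(EuclideanSpace ℝ (Fin d), ℝ)) x * g' (τ x ω) :=
    fun k => hT' n (q k) (hqT k)
  have hfinal : Tendsto (fun k => ∫ x, f' (τ x ω) * ((q k).2 : C(EuclideanSpace ℝ (Fin d), ℝ)) x)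
      atTop (nhds (- ∫ x, ψ x * g' (τ x ω))) := by
    have := hLim2.neg
    exact this.congr fun k => (hEq k).symm
  exact tendsto_nhds_unique hLim1 hfinal
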